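/- (Decomposition of the test-score regression coefficient.) Fix integers t and ℓ ≥ 0. Suppose cov(θ_t, η_t) = 0, cov(θ_{t+ℓ}, η_t) = 0, cov(ε_{t+ℓ}, θ_t) = 0, cov(ε_{t+ℓ}, η_t) = 0, τ ≠ 0, and Var(θ_t) > 0. Then Var(T̃_t) = τ²·Var(θ_t) + Var(η_t) > 0 and the population regression coefficient of w_{t+ℓ} on T̃_t satisfies cov(w_{t+ℓ}, T̃_t) / Var(T̃_t) = (μ_{t+ℓ}/τ) · ( 1 + cov(θ_{t+ℓ} − θ_t, θ_t) / Var(θ_t) ) · ( τ²·Var(θ_t) / (τ²·Var(θ_t) + Var(η_t)) ). -/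

import Mathlib

open MeasureTheory ProbabilityTheory

/-- Covariance of two real-valued random variables under measure `P`. -/
noncomputable def cov {Ω : Type*} [MeasurableSpace Ω] (P : Measure Ω) (X Y : Ω → ℝ) : ℝ :=
  ∫ ω, (X ω - ∫ a, X a ∂P) * (Y ω - ∫ a, Y a ∂P) ∂P

/-- Variance of a real-valued random variable under measure `P`. -/
noncomputable def Var {Ω : Type*} [MeasurableSpace Ω] (P : Measure Ω) (X : Ω → ℝ) : ℝ :=
  cov P X X

section Helpers

variable {Ω : Type*} [MeasurableSpace Ω] (P : Measure Ω) [IsProbabilityMeasure P]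

lemma memL2_integrable_mul {X Y : Ω → ℝ} (hX : MemLp X 2 P) (hY : MemLp Y 2 P) :
    Integrable (fun ω => X ω * Y ω) P := by
  have hb : Integrable (fun ω => (X ω ^ 2 + Y ω ^ 2) / 2) P :=
    (hX.integrable_sq.add hY.integrable_sq).div_const 2
  refine hb.mono' (hX.aestronglyMeasurable.mul hY.aestronglyMeasurable) ?_
  filter_upwards with ω
  have h1 := sq_nonneg (X ω - Y ω)
  have h2 := sq_nonneg (X ω + Y ω)
  rw [Real.norm_eq_abs, abs_le]
  constructor <;> nlinarith

lemma memL2_integrable {X : Ω → ℝ} (hX : MemLp X 2 P) : Integrable X P :=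
  hX.integrable one_le_two

lemma cov_comm (X Y : Ω → ℝ) : cov P X Y = cov P Y X := by
  unfold cov; congr 1; ext ω; ring

lemma cov_smul_left (a : ℝ) (X Y : Ω → ℝ) :
    cov P (fun ω => a * X ω) Y = a * cov P X Y := by
  unfold cov
  rw [integral_const_mul,
    ← integral_const_mul a (fun ω => (X ω - ∫ a, X a ∂P) * (Y ω - ∫ a, Y a ∂P))]
  apply integral_congr_ae
  filter_upwards with ω
  ring

lemma cov_add_left {X Y : Ω → ℝ} (Z : Ω → ℝ) (hX : MemLp X 2 P) (hY : MemLp Y 2 P)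
    (hZ : MemLp Z 2 P) :
    cov P (fun ω => X ω + Y ω) Z = cov P X Z + cov P Y Z := by
  unfold cov
  have hmean : (∫ a, (X a + Y a) ∂P) = (∫ a, X a ∂P) + ∫ a, Y a ∂P :=
    integral_add (memL2_integrable P hX) (memL2_integrable P hY)
  rw [hmean]
  have hXm : MemLp (fun ω => X ω - ∫ a, X a ∂P) 2 P := hX.sub (memLp_const _)
  have hYm : MemLp (fun ω => Y ω - ∫ a, Y a ∂P) 2 P := hY.sub (memLp_const _)
  have hZm : MemLp (fun ω => Z ω - ∫ a, Z a ∂P) 2 P := hZ.sub (memLp_const _)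
  have h1 := memL2_integrable_mul P hXm hZm
  have h2 := memL2_integrable_mul P hYm hZm
  rw [← integral_add h1 h2]
  congr 1; ext ω; ring

lemma Var_nonneg (X : Ω → ℝ) : 0 ≤ Var P X := by
  unfold Var cov
  refine integral_nonneg fun ω => ?_
  exact mul_self_nonneg _

/-- Covariance of two affine combinations expands bilinearly. -/
lemma cov_expand {X Y Z W : Ω → ℝ} (a b : ℝ)
    (hX : MemLp X 2 P) (hY : MemLp Y 2 P) (hZ : MemLp Z 2 P) (hW : MemLp W 2 P) :
    cov P (fun ω => a * X ω + Y ω) (fun ω => b * Z ω + W ω) =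
      a * b * cov P X Z + a * cov P X W + b * cov P Y Z + cov P Y W := by
  have hbZ : MemLp (fun ω => b * Z ω) 2 P := hZ.const_mul b
  have hZW : MemLp (fun ω => b * Z ω + W ω) 2 P := hbZ.add hW
  have haX : MemLp (fun ω => a * X ω) 2 P := hX.const_mul a
  rw [cov_add_left P _ haX hY hZW, cov_smul_left]
  rw [cov_comm P X, cov_add_left P _ hbZ hW hX, cov_smul_left,
    cov_comm P Y, cov_add_left P _ hbZ hW hY, cov_smul_left]
  rw [cov_comm P Z X, cov_comm P W X, cov_comm P Z Y, cov_comm P W Y]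
  ring

end Helpers

/-- Decomposition of the test-score regression coefficient: the population regression
coefficient of `w (t+ℓ)` on the test-score residual `T̃ t` equals `(μ (t+ℓ)/τ)` times a
skill-dynamics term times the test reliability ratio. -/
theorem test_score_regression_decomposition
    {Ω : Type*} [MeasurableSpace Ω] (P : Measure Ω) [IsProbabilityMeasure P]
    (θ ε : ℤ → Ω → ℝ) (μ : ℤ → ℝ) (w : ℤ → Ω → ℝ)
    (hθ : ∀ t, MemLp (θ t) 2 P) (hε : ∀ t, MemLp (ε t) 2 P)
    (hw : ∀ t ω, w t ω = μ t * θ t ω + ε t ω)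
    (τ : ℝ) (η : ℤ → Ω → ℝ) (hη : ∀ t, MemLp (η t) 2 P)
    (T : ℤ → Ω → ℝ) (hT : ∀ t ω, T t ω = τ * θ t ω + η t ω)
    (t ℓ : ℤ) (hℓ : 0 ≤ ℓ)
    (h1 : cov P (θ t) (η t) = 0)
    (h2 : cov P (θ (t + ℓ)) (η t) = 0)
    (h3 : cov P (ε (t + ℓ)) (θ t) = 0)
    (h4 : cov P (ε (t + ℓ)) (η t) = 0)
    (hτ : τ ≠ 0) (hVθ : 0 < Var P (θ t)) :
    Var P (T t) = τ ^ 2 * Var P (θ t) + Var P (η t) ∧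
      0 < Var P (T t) ∧
      cov P (w (t + ℓ)) (T t) / Var P (T t) =
        (μ (t + ℓ) / τ) *
          (1 + cov P (fun ω => θ (t + ℓ) ω - θ t ω) (θ t) / Var P (θ t)) *
          (τ ^ 2 * Var P (θ t) / (τ ^ 2 * Var P (θ t) + Var P (η t))) := by
  have hTfun : T t = fun ω => τ * θ t ω + η t ω := funext (hT t)
  have hwfun : w (t + ℓ) = fun ω => μ (t + ℓ) * θ (t + ℓ) ω + ε (t + ℓ) ω :=
    funext (hw (t + ℓ))
  -- Var(T t)
  have hVarT : Var P (T t) = τ ^ 2 * Var P (θ t) + Var P (η t) := by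
    unfold Var
    rw [hTfun, cov_expand P τ τ (hθ t) (hη t) (hθ t) (hη t), h1, cov_comm P (η t) (θ t), h1]
    ring
  have hVη : 0 ≤ Var P (η t) := Var_nonneg P (η t)
  have hVTpos : 0 < Var P (T t) := by
    rw [hVarT]
    have : 0 < τ ^ 2 * Var P (θ t) := mul_pos (by positivity) hVθ
    linarith
  refine ⟨hVarT, hVTpos, ?_⟩
  -- cov(w, T)
  have hcovwT : cov P (w (t + ℓ)) (T t) = μ (t + ℓ) * τ * cov P (θ (t + ℓ)) (θ t) := by
    rw [hwfun, hTfun,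
      cov_expand P (μ (t + ℓ)) τ (hθ (t + ℓ)) (hε (t + ℓ)) (hθ t) (hη t), h2, h3, h4]
    ring
  -- cov(θ' - θ, θ)
  have hcovdiff : cov P (fun ω => θ (t + ℓ) ω - θ t ω) (θ t) =
      cov P (θ (t + ℓ)) (θ t) - Var P (θ t) := by
    have : cov P (fun ω => θ (t + ℓ) ω - θ t ω) (θ t) =
        cov P (fun ω => (-1) * θ t ω + θ (t + ℓ) ω) (fun ω => (1:ℝ) * θ t ω + 0) := by
      congr 1 <;> ext ω <;> ring
    rw [this, cov_expand P (-1) 1 (hθ t) (hθ (t + ℓ)) (hθ t) (memLp_const 0)]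
    have hc0 : ∀ X : Ω → ℝ, cov P X (fun _ => (0:ℝ)) = 0 := by
      intro X; unfold cov; simp
    rw [hc0, hc0]
    unfold Var
    ring
  rw [hcovwT, hcovdiff, hVarT]
  field_simp
  ring
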